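/- Fix a real constant k. On the open set U = { (x₁,x₂,p₁,p₂) ∈ ℝ⁴ : x₁ ≠ 0 and x₂ ≠ 0 }, define the vector fields X₁ = (0, 0, −x₁, −x₂), X₂ = (−x₁/2, −x₂/2, p₁/2, p₂/2), X₃ = (p₁, p₂, k/x₁³, k/x₂³), and Y with components Y = ( 2(x₁p₂−p₁x₂)x₂, −2(x₁p₂−p₁x₂)x₁, 2[(x₁p₂−p₁x₂)p₂ + k(x₁⁴−x₂⁴)/(x₁³x₂²)], −2[(x₁p₂−p₁x₂)p₁ + k(x₁⁴−x₂⁴)/(x₂³x₁²)] ). Then [Y,X₁] = [Y,X₂] = [Y,X₃] = 0 at every point of U; that is, Y is a t-independent Lie symmetry of the two-dimensional Smorodinsky--Winternitz oscillator. -/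

import Mathlib

/-- The Lie bracket of two differentiable vector fields on a real normed space:
`[A,B](z) = DB(z)(A(z)) − DA(z)(B(z))`. -/
noncomputable def vfBracket {E : Type*} [NormedAddCommGroup E]
    [NormedSpace ℝ E] (A B : E → E) (z : E) : E :=
  fderiv ℝ B z (A z) - fderiv ℝ A z (B z)

set_option maxHeartbeats 2000000 in
/-- The Hamiltonian vector field `Y` of the constant of motion
`I = (x₁p₂ − p₁x₂)² + k((x₁/x₂)² + (x₂/x₁)²)` commutes with the Vessiot–Guldberg vector
fields `X₁, X₂, X₃` of the two-dimensional Smorodinsky–Winternitz oscillator on the open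
set where `x₁ ≠ 0` and `x₂ ≠ 0`: `Y` is a `t`-independent Lie symmetry of the system.
A point of `(ℝ×ℝ) × (ℝ×ℝ)` is written `((x₁,x₂),(p₁,p₂))`. -/
theorem smorodinsky_winternitz_lie_symmetry (k : ℝ)
    (X₁ X₂ X₃ Y : (ℝ × ℝ) × (ℝ × ℝ) → (ℝ × ℝ) × (ℝ × ℝ))
    (hX₁ : ∀ z : (ℝ × ℝ) × (ℝ × ℝ), X₁ z = ((0, 0), (-z.1.1, -z.1.2)))
    (hX₂ : ∀ z : (ℝ × ℝ) × (ℝ × ℝ),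
      X₂ z = ((-z.1.1 / 2, -z.1.2 / 2), (z.2.1 / 2, z.2.2 / 2)))
    (hX₃ : ∀ z : (ℝ × ℝ) × (ℝ × ℝ),
      X₃ z = ((z.2.1, z.2.2), (k / z.1.1 ^ 3, k / z.1.2 ^ 3)))
    (hY : ∀ z : (ℝ × ℝ) × (ℝ × ℝ),
      Y z = ((2 * (z.1.1 * z.2.2 - z.2.1 * z.1.2) * z.1.2,
              -(2 * (z.1.1 * z.2.2 - z.2.1 * z.1.2) * z.1.1)),
             (2 * ((z.1.1 * z.2.2 - z.2.1 * z.1.2) * z.2.2 +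
                k * (z.1.1 ^ 4 - z.1.2 ^ 4) / (z.1.1 ^ 3 * z.1.2 ^ 2)),
              -(2 * ((z.1.1 * z.2.2 - z.2.1 * z.1.2) * z.2.1 +
                k * (z.1.1 ^ 4 - z.1.2 ^ 4) / (z.1.2 ^ 3 * z.1.1 ^ 2))))))
    (z : (ℝ × ℝ) × (ℝ × ℝ)) (hz1 : z.1.1 ≠ 0) (hz2 : z.1.2 ≠ 0) :
    vfBracket Y X₁ z = 0 ∧ vfBracket Y X₂ z = 0 ∧ vfBracket Y X₃ z = 0 := by
  have hx1 : HasFDerivAt (fun z : (ℝ×ℝ)×(ℝ×ℝ) => z.1.1)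
      ((ContinuousLinearMap.fst ℝ ℝ ℝ).comp (ContinuousLinearMap.fst ℝ (ℝ×ℝ) (ℝ×ℝ))) z :=
    hasFDerivAt_fst.comp z hasFDerivAt_fst
  have hx2 : HasFDerivAt (fun z : (ℝ×ℝ)×(ℝ×ℝ) => z.1.2)
      ((ContinuousLinearMap.snd ℝ ℝ ℝ).comp (ContinuousLinearMap.fst ℝ (ℝ×ℝ) (ℝ×ℝ))) z :=
    hasFDerivAt_snd.comp z hasFDerivAt_fst
  have hp1 : HasFDerivAt (fun z : (ℝ×ℝ)×(ℝ×ℝ) => z.2.1)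
      ((ContinuousLinearMap.fst ℝ ℝ ℝ).comp (ContinuousLinearMap.snd ℝ (ℝ×ℝ) (ℝ×ℝ))) z :=
    hasFDerivAt_fst.comp z hasFDerivAt_snd
  have hp2 : HasFDerivAt (fun z : (ℝ×ℝ)×(ℝ×ℝ) => z.2.2)
      ((ContinuousLinearMap.snd ℝ ℝ ℝ).comp (ContinuousLinearMap.snd ℝ (ℝ×ℝ) (ℝ×ℝ))) z :=
    hasFDerivAt_snd.comp z hasFDerivAt_snd
  -- cross term
  have hc := (hx1.mul hp2).sub (hp1.mul hx2)
  -- powers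
  have h4x1 := (hasDerivAt_pow 4 z.1.1).comp_hasFDerivAt z hx1
  have h4x2 := (hasDerivAt_pow 4 z.1.2).comp_hasFDerivAt z hx2
  have h3x1 := (hasDerivAt_pow 3 z.1.1).comp_hasFDerivAt z hx1
  have h3x2 := (hasDerivAt_pow 3 z.1.2).comp_hasFDerivAt z hx2
  have h2x1 := (hasDerivAt_pow 2 z.1.1).comp_hasFDerivAt z hx1
  have h2x2 := (hasDerivAt_pow 2 z.1.2).comp_hasFDerivAt z hx2
  -- inverses of denominators
  have hne1 : z.1.1 ^ 3 * z.1.2 ^ 2 ≠ 0 := by positivity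
  have hne2 : z.1.2 ^ 3 * z.1.1 ^ 2 ≠ 0 := by positivity
  have hden1 := h3x1.mul h2x2
  have hden2 := h3x2.mul h2x1
  have hinv1 := (hasDerivAt_inv hne1).comp_hasFDerivAt z hden1
  have hinv2 := (hasDerivAt_inv hne2).comp_hasFDerivAt z hden2
  -- components of Y (in mul-inv form)
  have h11 := (hc.const_mul 2).mul hx2
  have h12 := ((hc.const_mul 2).mul hx1).neg
  have h21 := (((hc.mul hp2).add (((h4x1.sub h4x2).const_mul k).mul hinv1)).const_mul 2)
  have h22 := (((hc.mul hp1).add (((h4x1.sub h4x2).const_mul k).mul hinv2)).const_mul 2).neg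
  have hYD := (h11.prodMk h12).prodMk (h21.prodMk h22)
  have hYD' : HasFDerivAt Y _ z := hYD.congr_of_eventuallyEq (Filter.Eventually.of_forall (fun w => by
    rw [hY w]
    refine Prod.ext (Prod.ext ?_ ?_) (Prod.ext ?_ ?_) <;> simp <;> ring))
  -- the X fields
  have hX1D := ((hasFDerivAt_const (0:ℝ) z).prodMk (hasFDerivAt_const (0:ℝ) z)).prodMk
      (hx1.neg.prodMk hx2.neg)
  have hX1D' : HasFDerivAt X₁ _ z := hX1D.congr_of_eventuallyEq (Filter.Eventually.of_forall (fun w => by rw [hX₁ w]; rfl))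
  have hX2D := ((hx1.neg.const_mul (2:ℝ)⁻¹).prodMk (hx2.neg.const_mul (2:ℝ)⁻¹)).prodMk
      ((hp1.const_mul (2:ℝ)⁻¹).prodMk (hp2.const_mul (2:ℝ)⁻¹))
  have hX2D' : HasFDerivAt X₂ _ z := hX2D.congr_of_eventuallyEq (Filter.Eventually.of_forall (fun w => by
    rw [hX₂ w]
    refine Prod.ext (Prod.ext ?_ ?_) (Prod.ext ?_ ?_) <;> simp <;> ring))
  have hk1 := ((hasDerivAt_inv (pow_ne_zero 3 hz1)).comp_hasFDerivAt z h3x1).const_mul k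
  have hk2 := ((hasDerivAt_inv (pow_ne_zero 3 hz2)).comp_hasFDerivAt z h3x2).const_mul k
  have hX3D := (hp1.prodMk hp2).prodMk (hk1.prodMk hk2)
  have hX3D' : HasFDerivAt X₃ _ z := hX3D.congr_of_eventuallyEq (Filter.Eventually.of_forall (fun w => by
    rw [hX₃ w]
    refine Prod.ext rfl (Prod.ext ?_ ?_) <;> simp [div_eq_mul_inv, mul_comm]))
  refine ⟨?_, ?_, ?_⟩ <;>
  · simp only [vfBracket, hYD'.fderiv, hX1D'.fderiv, hX2D'.fderiv, hX3D'.fderiv,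
      hX₁ z, hX₂ z, hX₃ z, hY z, ContinuousLinearMap.prod_apply,
      ContinuousLinearMap.comp_apply, ContinuousLinearMap.add_apply,
      ContinuousLinearMap.sub_apply, ContinuousLinearMap.smul_apply,
      ContinuousLinearMap.neg_apply, ContinuousLinearMap.zero_apply,
      ContinuousLinearMap.coe_fst', ContinuousLinearMap.coe_snd',
      Function.comp_apply, smul_eq_mul, Prod.mk_sub_mk, Prod.mk_eq_zero,
      Nat.cast_ofNat, Pi.mul_apply, Pi.sub_apply, Pi.add_apply, Pi.neg_apply]
    refine ⟨⟨?_, ?_⟩, ?_, ?_⟩ <;> (field_simp; ring)
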